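/- With θ the truncated energy defined by θ(𝒞) = Σ_{σ∈𝒞, |δ_ν(σ)|≤K} μ(σ)δ_ν(σ)² + 2K Σ_{σ∈𝒞, |δ_ν(σ)|>K} μ(σ)|δ_ν(σ)|: if 𝒞 ⪯ 𝒟 are partitions and every σ ∈ 𝒞 with |δ_ν(σ)| > K belongs to 𝒟 (that is, 𝒞_{ν>K} ⊆ 𝒟), then θ(𝒞) ≤ θ(𝒟). -/

import Mathlib

open scoped Classical

/-- An additive function on a Boolean algebra. -/
def IsAdditive {α : Type*} [BooleanAlgebra α] (ν : α → ℝ) : Prop :=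
  ν ⊥ = 0 ∧ ∀ σ τ : α, ν (σ ⊔ τ) = ν σ + ν τ - ν (σ ⊓ τ)

/-- A partition: a finite set of pairwise disjoint elements. -/
def IsPartition {α : Type*} [BooleanAlgebra α] (A : Finset α) : Prop :=
  ∀ σ ∈ A, ∀ τ ∈ A, σ ≠ τ → σ ⊓ τ = ⊥

/-- `Refines A B` means `B` refines `A`. -/
def Refines {α : Type*} [BooleanAlgebra α] (A B : Finset α) : Prop :=
  B.sup id = A.sup id ∧ ∀ σ ∈ B, ∃ τ ∈ A, σ ≤ τ

/-- The K-truncated energy θ(𝒞) of an additive ν with respect to μ. -/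
noncomputable def truncEnergy {α : Type*} [BooleanAlgebra α]
    (μ ν : α → ℝ) (K : ℝ) (C : Finset α) : ℝ :=
  ∑ σ ∈ C.filter (fun σ => |ν σ / μ σ| ≤ K), μ σ * (ν σ / μ σ) ^ 2
    + 2 * K * ∑ σ ∈ C.filter (fun σ => K < |ν σ / μ σ|), μ σ * |ν σ / μ σ|

/-- The Huber-type convex function underlying the truncated energy. -/
noncomputable def huber (K x : ℝ) : ℝ := if |x| ≤ K then x^2 else 2*K*|x| - K^2

lemma huber_lb (K y : ℝ) : 2*K*|y| - K^2 ≤ huber K y := by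
  unfold huber
  split_ifs with h
  · nlinarith [sq_abs y, sq_nonneg (|y| - K)]
  · exact le_refl _

/-- Tangent-line inequality: `huber K` lies above its tangent at `x`
    (with slope the clipped derivative). -/
lemma huber_tangent (K : ℝ) (hK : 0 < K) (x y : ℝ) :
    huber K x + (max (-(2*K)) (min (2*K) (2*x))) * (y - x) ≤ huber K y := by
  have hy2 := huber_lb K y
  rcases le_or_gt |x| K with hx | hx
  · have hxK : x ≤ K := (le_abs_self x).trans hx
    have hxK' : -K ≤ x := by
      have := (neg_abs_le x); linarith
    have hclip : max (-(2*K)) (min (2*K) (2*x)) = 2*x := by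
      rw [min_eq_right (by linarith), max_eq_right (by linarith)]
    rw [hclip]
    have hhx : huber K x = x^2 := if_pos hx
    rw [hhx]
    rcases le_or_gt |y| K with hy | hy
    · rw [show huber K y = y^2 from if_pos hy]
      nlinarith [sq_nonneg (x - y)]
    · have hxy : x*y ≤ |x| * |y| :=
        (le_abs_self (x*y)).trans (le_of_eq (abs_mul x y) : |x*y| ≤ |x| * |y|)
      have h3 : (0:ℝ) ≤ (K - |x|) * (2*|y| - K - |x|) :=
        mul_nonneg (by linarith) (by linarith)
      nlinarith [sq_abs x]
  · rcases le_or_gt x 0 with hx0 | hx0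
    · have hax : |x| = -x := abs_of_nonpos hx0
      have hxK : x < -K := by rw [hax] at hx; linarith
      have hclip : max (-(2*K)) (min (2*K) (2*x)) = -(2*K) := by
        rw [min_eq_right (by linarith), max_eq_left (by linarith)]
      rw [hclip]
      have hhx : huber K x = 2*K*(-x) - K^2 := by
        rw [huber, if_neg (not_le.2 hx), hax]
      rw [hhx]
      have hny : -y ≤ |y| := by have := neg_abs_le y; linarith
      nlinarith
    · have hax : |x| = x := abs_of_pos hx0
      have hxK : K < x := by rwa [hax] at hx
      have hclip : max (-(2*K)) (min (2*K) (2*x)) = 2*K := by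
        rw [min_eq_left (by linarith), max_eq_right (by linarith)]
      rw [hclip]
      have hhx : huber K x = 2*K*x - K^2 := by
        rw [huber, if_neg (not_le.2 hx), hax]
      rw [hhx]
      have hny : y ≤ |y| := le_abs_self y
      nlinarith

/-- An additive function sums over pairwise-disjoint finite families. -/
lemma sum_of_additive {α : Type*} [BooleanAlgebra α] {ν : α → ℝ} (hν : IsAdditive ν)
    (A : Finset α) : IsPartition A → ν (A.sup id) = ∑ σ ∈ A, ν σ := by
  classical
  induction A using Finset.induction_on with
  | empty => intro _; simpa using hν.1
  | @insert a s ha ih =>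
    intro hA
    have hs : IsPartition s := fun σ hσ τ hτ h =>
      hA σ (Finset.mem_insert_of_mem hσ) τ (Finset.mem_insert_of_mem hτ) h
    have hdisj : a ⊓ s.sup id = ⊥ := by
      rw [Finset.sup_inf_distrib_left]
      rw [Finset.sup_eq_bot_iff]
      intro b hb
      exact hA a (Finset.mem_insert_self a s) b (Finset.mem_insert_of_mem hb)
        (fun h => ha (h ▸ hb))
    rw [Finset.sup_insert, Finset.sum_insert ha, id_eq, hν.2 a (s.sup id), hdisj, hν.1, ih hs]
    ring

/-- Rewriting the truncated energy via the Huber function. -/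
lemma truncEnergy_eq_huber {α : Type*} [BooleanAlgebra α]
    (μ ν : α → ℝ) (K : ℝ) (A : Finset α) :
    truncEnergy μ ν K A
      = (∑ σ ∈ A, μ σ * huber K (ν σ / μ σ))
        + K^2 * ∑ σ ∈ A.filter (fun σ => K < |ν σ / μ σ|), μ σ := by
  classical
  have hnot : A.filter (fun σ => ¬ |ν σ / μ σ| ≤ K) = A.filter (fun σ => K < |ν σ / μ σ|) := by
    apply Finset.filter_congr
    intro σ _
    simp [not_le]
  have key : ∑ σ ∈ A, μ σ * huber K (ν σ / μ σ)
      = (∑ σ ∈ A.filter (fun σ => |ν σ / μ σ| ≤ K), μ σ * (ν σ / μ σ)^2)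
        + ((2*K * ∑ σ ∈ A.filter (fun σ => K < |ν σ / μ σ|), μ σ * |ν σ / μ σ|)
            - K^2 * ∑ σ ∈ A.filter (fun σ => K < |ν σ / μ σ|), μ σ) := by
    rw [← Finset.sum_filter_add_sum_filter_not A (fun σ => |ν σ / μ σ| ≤ K)
      (fun σ => μ σ * huber K (ν σ / μ σ))]
    congr 1
    · exact Finset.sum_congr rfl (fun σ hσ => by
        rw [huber, if_pos (Finset.mem_filter.mp hσ).2])
    · rw [hnot, Finset.mul_sum, Finset.mul_sum, ← Finset.sum_sub_distrib]
      exact Finset.sum_congr rfl (fun σ hσ => by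
        rw [huber, if_neg (not_le.2 (Finset.mem_filter.mp hσ).2)]
        ring)
  rw [truncEnergy, key]
  ring

/-- the truncated energy is monotone under refinements which keep
    the high-density elements: if 𝒞 ⪯ 𝒟 and 𝒞_{ν>K} ⊆ 𝒟 then θ(𝒞) ≤ θ(𝒟). -/
theorem truncEnergy_mono {α : Type*} [BooleanAlgebra α]
    (μ ν : α → ℝ) (hμadd : IsAdditive μ) (hνadd : IsAdditive ν)
    (hμ01 : ∀ σ, 0 ≤ μ σ ∧ μ σ ≤ 1) (hμtop : μ ⊤ = 1)
    (K : ℝ) (hK : 0 < K)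
    (C D : Finset α) (hC : IsPartition C) (hD : IsPartition D)
    (href : Refines C D)
    (hμposC : ∀ σ ∈ C, 0 < μ σ) (hμposD : ∀ σ ∈ D, 0 < μ σ)
    (hcut : C.filter (fun σ => K < |ν σ / μ σ|) ⊆ D) :
    truncEnergy μ ν K C ≤ truncEnergy μ ν K D := by
  classical
  obtain ⟨hsup, hfib⟩ := href
  have hμbot := hμadd.1
  -- high-density elements of C are high-density elements of D
  have hsub : C.filter (fun σ => K < |ν σ / μ σ|) ⊆ D.filter (fun σ => K < |ν σ / μ σ|) := by
    intro σ hσ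
    rw [Finset.mem_filter] at hσ ⊢
    exact ⟨hcut (Finset.mem_filter.2 hσ), hσ.2⟩
  have h2 : ∑ σ ∈ C.filter (fun σ => K < |ν σ / μ σ|), μ σ
      ≤ ∑ σ ∈ D.filter (fun σ => K < |ν σ / μ σ|), μ σ :=
    Finset.sum_le_sum_of_subset_of_nonneg hsub (fun σ _ _ => (hμ01 σ).1)
  -- elements of D are nonbot
  have hne : ∀ σ ∈ D, σ ≠ ⊥ := fun σ hσ h => by
    have hp := hμposD σ hσ
    rw [h, hμbot] at hp
    exact lt_irrefl 0 hp
  -- D decomposes into fibers over C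
  have hDbu : D = C.biUnion (fun τ => D.filter (fun σ => σ ≤ τ)) := by
    ext σ
    simp only [Finset.mem_biUnion, Finset.mem_filter]
    constructor
    · intro hσ
      obtain ⟨τ, hτ, hle⟩ := hfib σ hσ
      exact ⟨τ, hτ, hσ, hle⟩
    · rintro ⟨τ, _, hσ, _⟩
      exact hσ
  have pd : (↑C : Set α).PairwiseDisjoint (fun τ => D.filter (fun σ => σ ≤ τ)) := by
    intro τ1 h1 τ2 h2' hne12
    refine Finset.disjoint_left.mpr ?_
    intro σ hσ1 hσ2
    rw [Finset.mem_filter] at hσ1 hσ2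
    have hbot : τ1 ⊓ τ2 = ⊥ := hC τ1 h1 τ2 h2' hne12
    have : σ = ⊥ := le_bot_iff.mp (hbot ▸ le_inf hσ1.2 hσ2.2)
    exact hne σ hσ1.1 this
  have hsumD : ∀ f : α → ℝ,
      ∑ σ ∈ D, f σ = ∑ τ ∈ C, ∑ σ ∈ D.filter (fun σ => σ ≤ τ), f σ := by
    intro f
    conv_lhs => rw [hDbu]
    exact Finset.sum_biUnion pd
  -- each fiber sups to its base
  have hfibsup : ∀ τ ∈ C, (D.filter (fun σ => σ ≤ τ)).sup id = τ := by
    intro τ hτ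
    apply le_antisymm
    · exact Finset.sup_le (fun σ hσ => (Finset.mem_filter.mp hσ).2)
    · have h1 : τ ≤ D.sup id := by
        rw [hsup]; exact Finset.le_sup (f := id) hτ
      calc τ = τ ⊓ D.sup id := (inf_eq_left.mpr h1).symm
        _ = D.sup (fun σ => τ ⊓ id σ) := Finset.sup_inf_distrib_left D id τ
        _ ≤ (D.filter (fun σ => σ ≤ τ)).sup id := by
            apply Finset.sup_le
            intro σ hσ
            by_cases hle : σ ≤ τ
            · have heq : τ ⊓ id σ = σ := inf_eq_right.mpr hle
              rw [heq]
              exact Finset.le_sup (f := id) (Finset.mem_filter.2 ⟨hσ, hle⟩)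
            · obtain ⟨τ', hτ', hle'⟩ := hfib σ hσ
              have hne' : τ' ≠ τ := fun h => hle (h ▸ hle')
              have hbot : τ ⊓ τ' = ⊥ := hC τ hτ τ' hτ' (Ne.symm hne')
              have : τ ⊓ id σ = ⊥ :=
                le_bot_iff.mp (hbot ▸ inf_le_inf_left τ hle')
              rw [this]
              exact bot_le
  -- fibers are partitions
  have hfibpart : ∀ τ : α, IsPartition (D.filter (fun σ => σ ≤ τ)) := fun τ σ hσ σ' hσ' h =>
    hD σ (Finset.mem_filter.mp hσ).1 σ' (Finset.mem_filter.mp hσ').1 h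
  -- μ and ν sum over fibers
  have hμτ : ∀ τ ∈ C, μ τ = ∑ σ ∈ D.filter (fun σ => σ ≤ τ), μ σ := by
    intro τ hτ
    conv_lhs => rw [← hfibsup τ hτ]
    exact sum_of_additive hμadd _ (hfibpart τ)
  have hντ : ∀ τ ∈ C, ν τ = ∑ σ ∈ D.filter (fun σ => σ ≤ τ), ν σ := by
    intro τ hτ
    conv_lhs => rw [← hfibsup τ hτ]
    exact sum_of_additive hνadd _ (hfibpart τ)
  -- Jensen on each fiber via the tangent-line inequality
  have hJ : ∀ τ ∈ C, μ τ * huber K (ν τ / μ τ)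
      ≤ ∑ σ ∈ D.filter (fun σ => σ ≤ τ), μ σ * huber K (ν σ / μ σ) := by
    intro τ hτ
    set t := D.filter (fun σ => σ ≤ τ) with ht
    set x := ν τ / μ τ with hx
    set g := max (-(2*K)) (min (2*K) (2*x)) with hg
    have step : ∀ σ ∈ t, μ σ * huber K x + g * (ν σ - μ σ * x)
        ≤ μ σ * huber K (ν σ / μ σ) := by
      intro σ hσ
      have hpos := hμposD σ (Finset.mem_filter.mp hσ).1
      have htan := huber_tangent K hK x (ν σ / μ σ)
      have h' := mul_le_mul_of_nonneg_left htan hpos.le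
      calc μ σ * huber K x + g * (ν σ - μ σ * x)
          = μ σ * (huber K x + g * (ν σ / μ σ - x)) := by
            field_simp
        _ ≤ μ σ * huber K (ν σ / μ σ) := h'
    have hμτ' := hμτ τ hτ
    have hντ' := hντ τ hτ
    have hposτ := hμposC τ hτ
    calc μ τ * huber K x
        = (∑ σ ∈ t, μ σ) * huber K x + g * ((∑ σ ∈ t, ν σ) - (∑ σ ∈ t, μ σ) * x) := by
          rw [← hμτ', ← hντ']
          have h0 : ν τ - μ τ * x = 0 := by
            rw [hx]; field_simp; ring
          rw [h0, mul_zero, add_zero]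
      _ = ∑ σ ∈ t, (μ σ * huber K x + g * (ν σ - μ σ * x)) := by
          rw [Finset.sum_add_distrib, ← Finset.sum_mul, ← Finset.mul_sum,
            Finset.sum_sub_distrib, ← Finset.sum_mul]
      _ ≤ ∑ σ ∈ t, μ σ * huber K (ν σ / μ σ) := Finset.sum_le_sum step
  have h1 : ∑ τ ∈ C, μ τ * huber K (ν τ / μ τ)
      ≤ ∑ σ ∈ D, μ σ * huber K (ν σ / μ σ) := by
    rw [hsumD (fun σ => μ σ * huber K (ν σ / μ σ))]
    exact Finset.sum_le_sum hJ
  rw [truncEnergy_eq_huber μ ν K C, truncEnergy_eq_huber μ ν K D]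
  have hK2 : (0:ℝ) ≤ K^2 := sq_nonneg K
  have := mul_le_mul_of_nonneg_left h2 hK2
  linarith
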